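/- Let q be a prime and let g(x) = x^{e}·g₁(x), h(x) ∈ ℤ[x] with deg g = d, deg h < e, where the leading coefficient of g₁ and the constant coefficient of h are q-adic units, all coefficients have nonnegative q-adic valuation, and g₁(0), h(0) are q-adic units. Let a ∈ ℚ with ν_q(a) > 0. Then the q-adic Newton polygon of g(x) − a·h(x) has exactly two slopes: slope 0 with multiplicity d − e and slope −ν_q(a)/e with multiplicity e. In particular, g(x) − a·h(x) has exactly e roots (counted with multiplicity) of positive valuation in an algebraic closure of ℚ_q. -/

import Mathlib

section stmt16helpers

variable {L : Type} [Field L] [CharZero L] (v : AddValuation L (WithTop ℚ)) (q : ℕ)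

lemma stmt16.vint_nonneg
    (hv : ∀ n : ℤ, n ≠ 0 → v ((n : ℤ) : L) = ((padicValInt q n : ℚ) : WithTop ℚ))
    (n : ℤ) : 0 ≤ v ((n : ℤ) : L) := by
  rcases eq_or_ne n 0 with rfl | hn
  · simp only [Int.cast_zero, AddValuation.map_zero]; exact le_top
  · rw [hv n hn]
    exact_mod_cast (by positivity : (0:ℚ) ≤ (padicValInt q n : ℚ))

lemma stmt16.vint_unit
    (hv : ∀ n : ℤ, n ≠ 0 → v ((n : ℤ) : L) = ((padicValInt q n : ℚ) : WithTop ℚ))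
    {n : ℤ} (h : ¬ (q : ℤ) ∣ n) : v ((n : ℤ) : L) = 0 := by
  have hn : n ≠ 0 := by rintro rfl; exact h (dvd_zero _)
  rw [hv n hn, padicValInt.eq_zero_of_not_dvd h]
  simp

lemma stmt16.vrat_eq
    (hv : ∀ n : ℤ, n ≠ 0 → v ((n : ℤ) : L) = ((padicValInt q n : ℚ) : WithTop ℚ))
    (a : ℚ) (ha : a ≠ 0) : v ((a : L)) = (((padicValRat q a : ℤ) : ℚ) : WithTop ℚ) := by
  have hden0 : ((a.den : ℤ) : L) ≠ 0 := by
    simp only [Int.cast_natCast, Nat.cast_ne_zero]; exact a.den_nz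
  have hnum : ((a.num : ℤ) : L) = (a : L) * ((a.den : ℤ) : L) := by
    push_cast
    rw [Rat.cast_def, div_mul_cancel₀]
    simpa using hden0
  have h1 := hv a.num (Rat.num_ne_zero.2 ha)
  have h2 := hv (a.den : ℤ) (by exact_mod_cast a.den_nz)
  rw [hnum, v.map_mul, h2] at h1
  have hne : v ((a:L)) ≠ ⊤ := by
    intro h
    rw [h] at h1
    simp at h1
  obtain ⟨r, hr⟩ := WithTop.ne_top_iff_exists.1 hne
  rw [← hr] at h1 ⊢
  rw [← WithTop.coe_add] at h1
  have h3 := WithTop.coe_inj.1 h1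
  rw [WithTop.coe_inj]
  rw [padicValRat_def]
  have h4 : padicValInt q (a.den : ℤ) = padicValNat q a.den := padicValInt.of_nat
  rw [h4] at h3
  rw [Int.cast_sub, Int.cast_natCast, Int.cast_natCast]
  linarith [h3]

lemma stmt16.veval_nonneg
    (hv : ∀ n : ℤ, n ≠ 0 → v ((n : ℤ) : L) = ((padicValInt q n : ℚ) : WithTop ℚ))
    (f : Polynomial ℤ) {z : L} (hz : 0 ≤ v z) :
    0 ≤ v ((f.map (Int.castRingHom L)).eval z) := by
  rw [Polynomial.eval_eq_sum_range]
  apply v.map_le_sum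
  intro i _
  rw [v.map_mul, v.map_pow, Polynomial.coeff_map]
  exact add_nonneg (stmt16.vint_nonneg v q hv _) (nsmul_nonneg hz i)

lemma stmt16.veval_low
    (hv : ∀ n : ℤ, n ≠ 0 → v ((n : ℤ) : L) = ((padicValInt q n : ℚ) : WithTop ℚ))
    (f : Polynomial ℤ) {z : L} {r : ℚ} (hz : v z = (r : WithTop ℚ)) (hr : r ≤ 0) :
    (((f.natDegree : ℚ) * r : ℚ) : WithTop ℚ) ≤ v ((f.map (Int.castRingHom L)).eval z) := by
  rw [Polynomial.eval_eq_sum_range]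
  apply v.map_le_sum
  intro i hi
  rw [v.map_mul, v.map_pow, Polynomial.coeff_map, hz, ← WithTop.coe_nsmul]
  have hi' : i ≤ f.natDegree := by
    have h1 := Polynomial.natDegree_map_le (f := Int.castRingHom L) (p := f)
    have h2 := Finset.mem_range.1 hi
    omega
  have key : ((f.natDegree : ℚ) * r : ℚ) ≤ (i • r : ℚ) := by
    rw [nsmul_eq_mul]
    apply mul_le_mul_of_nonpos_right _ hr
    exact_mod_cast hi'
  calc (((f.natDegree : ℚ) * r : ℚ) : WithTop ℚ) ≤ ((i • r : ℚ) : WithTop ℚ) := by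
        exact_mod_cast key
    _ ≤ v ((Int.castRingHom L) (f.coeff i)) + ((i • r : ℚ) : WithTop ℚ) :=
        le_add_of_nonneg_left (stmt16.vint_nonneg v q hv _)

lemma stmt16.veval_pos
    (hv : ∀ n : ℤ, n ≠ 0 → v ((n : ℤ) : L) = ((padicValInt q n : ℚ) : WithTop ℚ))
    (f : Polynomial ℤ) {z : L} (hz : 0 < v z) (h0 : ¬ (q : ℤ) ∣ f.coeff 0) :
    v ((f.map (Int.castRingHom L)).eval z) = 0 := by
  set F := f.map (Int.castRingHom L) with hF
  have hdivX : F.divX = f.divX.map (Int.castRingHom L) := by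
    ext i
    simp [hF, Polynomial.coeff_divX, Polynomial.coeff_map]
  have key : F = Polynomial.X * F.divX + Polynomial.C (F.coeff 0) :=
    (Polynomial.X_mul_divX_add F).symm
  have hc0 : F.coeff 0 = ((f.coeff 0 : ℤ) : L) := by simp [hF, Polynomial.coeff_map]
  have heval : F.eval z = ((f.coeff 0 : ℤ) : L) + z * (F.divX.eval z) := by
    conv_lhs => rw [key]
    simp [hc0]; ring
  rw [heval]
  have h1 : v (((f.coeff 0 : ℤ) : L)) = 0 := stmt16.vint_unit v q hv h0
  have h2 : (0 : WithTop ℚ) < v (z * F.divX.eval z) := by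
    rw [v.map_mul]
    calc (0 : WithTop ℚ) < v z := hz
      _ ≤ v z + v (F.divX.eval z) := le_add_of_nonneg_right (by
            rw [hdivX]; exact stmt16.veval_nonneg v q hv _ hz.le)
  rw [AddValuation.map_add_eq_of_lt_left _ (by rw [h1]; exact h2)]
  exact h1

lemma stmt16.veval_neg
    (hv : ∀ n : ℤ, n ≠ 0 → v ((n : ℤ) : L) = ((padicValInt q n : ℚ) : WithTop ℚ))
    (f : Polynomial ℤ) {z : L} {r : ℚ} (hz : v z = (r : WithTop ℚ)) (hr : r < 0)
    (hlead : ¬ (q : ℤ) ∣ f.leadingCoeff) :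
    v ((f.map (Int.castRingHom L)).eval z) = (((f.natDegree : ℚ) * r : ℚ) : WithTop ℚ) := by
  have key : f.eraseLead + Polynomial.C f.leadingCoeff * Polynomial.X ^ f.natDegree = f :=
    Polynomial.eraseLead_add_C_mul_X_pow f
  have heval : (f.map (Int.castRingHom L)).eval z
      = (f.eraseLead.map (Int.castRingHom L)).eval z
        + ((f.leadingCoeff : ℤ) : L) * z ^ f.natDegree := by
    conv_lhs => rw [← key]
    simp [Polynomial.eval_map, Polynomial.eval₂_add, Polynomial.eval₂_mul]
  have hlt : v (((f.leadingCoeff : ℤ) : L) * z ^ f.natDegree)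
      = (((f.natDegree : ℚ) * r : ℚ) : WithTop ℚ) := by
    rw [v.map_mul, v.map_pow, stmt16.vint_unit v q hv hlead, hz, ← WithTop.coe_nsmul, zero_add]
    rw [WithTop.coe_inj, nsmul_eq_mul]
  have hE : (((f.natDegree : ℚ) * r : ℚ) : WithTop ℚ)
      < v ((f.eraseLead.map (Int.castRingHom L)).eval z) := by
    rcases eq_or_ne f.eraseLead 0 with h0 | h0
    · rw [h0]
      simp only [Polynomial.map_zero, Polynomial.eval_zero, AddValuation.map_zero]
      exact WithTop.coe_lt_top _
    · have hn1 : 1 ≤ f.natDegree := by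
        by_contra hn
        have : f.natDegree = 0 := by omega
        rw [Polynomial.eq_C_of_natDegree_eq_zero this, Polynomial.eraseLead_C] at h0
        exact h0 rfl
      have hm : f.eraseLead.natDegree ≤ f.natDegree - 1 := Polynomial.eraseLead_natDegree_le f
      have hkey : (((f.natDegree : ℚ) * r : ℚ) : WithTop ℚ)
          < (((f.eraseLead.natDegree : ℚ) * r : ℚ) : WithTop ℚ) := by
        rw [WithTop.coe_lt_coe]
        apply mul_lt_mul_of_neg_right _ hr
        have h2 : (f.eraseLead.natDegree : ℚ) ≤ ((f.natDegree - 1 : ℕ) : ℚ) := by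
          exact_mod_cast hm
        have h3 : ((f.natDegree - 1 : ℕ) : ℚ) ≤ (f.natDegree : ℚ) - 1 := by
          rw [Nat.cast_sub hn1]; simp
        linarith
      exact lt_of_lt_of_le hkey (stmt16.veval_low v q hv f.eraseLead hz hr.le)
  rw [heval, AddValuation.map_add_eq_of_lt_right _ (by rw [hlt]; exact hE)]
  exact hlt

lemma stmt16.vprod (M : Multiset L) : v M.prod = (M.map (fun z => v z)).sum := by
  induction M using Multiset.induction with
  | empty => simp
  | cons x s ih => simp [v.map_mul, ih]

end stmt16helpers

open scoped Classical in
theorem stmt16 (q : ℕ) (hq : q.Prime) (e d : ℕ) (he : 0 < e)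
    (g₁ hp : Polynomial ℤ) (g : Polynomial ℤ) (hg : g = Polynomial.X ^ e * g₁)
    (hd : g.natDegree = d) (hhe : hp.natDegree < e)
    (hg₁lead : ¬ (q : ℤ) ∣ g₁.leadingCoeff) (hh0 : ¬ (q : ℤ) ∣ hp.coeff 0)
    (hg₁0 : ¬ (q : ℤ) ∣ g₁.coeff 0)
    (a : ℚ) (ha0 : a ≠ 0) (ha : 0 < padicValRat q a)
    (L : Type) [Field L] [IsAlgClosed L] [CharZero L]
    (v : AddValuation L (WithTop ℚ))
    (hv : ∀ n : ℤ, n ≠ 0 → v ((n : ℤ) : L) = ((padicValInt q n : ℚ) : WithTop ℚ))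
    (P : Polynomial L)
    (hP : P = g.map (Int.castRingHom L) - Polynomial.C (a : L) * hp.map (Int.castRingHom L)) :
    Multiset.card P.roots = d ∧
    (∀ z ∈ P.roots, v z = (0 : WithTop ℚ) ∨
        v z = (((padicValRat q a : ℚ) / (e : ℚ) : ℚ) : WithTop ℚ)) ∧
    Multiset.card (P.roots.filter (fun z => v z = (0 : WithTop ℚ))) = d - e ∧
    Multiset.card (P.roots.filter
        (fun z => v z = (((padicValRat q a : ℚ) / (e : ℚ) : ℚ) : WithTop ℚ))) = e := by
  set t : ℚ := ((padicValRat q a : ℤ) : ℚ) with ht_def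
  have ht : 0 < t := by rw [ht_def]; exact_mod_cast ha
  set te : ℚ := (padicValRat q a : ℚ) / (e : ℚ) with hte_def
  have hte_eq : te = t / (e : ℚ) := rfl
  have he' : (0:ℚ) < (e : ℚ) := by exact_mod_cast he
  have hte : 0 < te := by rw [hte_eq]; positivity
  set ι := Int.castRingHom L with hι
  have hinj : Function.Injective ι := Int.cast_injective
  set G := g.map ι with hG
  set G₁ := g₁.map ι with hG₁
  set H := hp.map ι with hH
  set m := g₁.natDegree with hm
  -- nonvanishing
  have hg₁ne : g₁ ≠ 0 := fun h => hg₁lead (by simp [h])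
  have hpne : hp ≠ 0 := fun h => hh0 (by simp [h])
  have hd' : d = e + m := by
    rw [← hd, hg, Polynomial.natDegree_mul (pow_ne_zero e Polynomial.X_ne_zero) hg₁ne,
      Polynomial.natDegree_X_pow]
  have hed : e ≤ d := by omega
  -- degree of P
  have hGdeg : G.natDegree = d := by
    rw [hG, Polynomial.natDegree_map_eq_of_injective hinj, hd]
  have hHdeg : H.natDegree < e := by
    rw [hH, Polynomial.natDegree_map_eq_of_injective hinj]; exact hhe
  have hAdeg : (Polynomial.C (a : L) * H).natDegree < G.natDegree := by
    calc (Polynomial.C (a : L) * H).natDegree ≤ H.natDegree := Polynomial.natDegree_C_mul_le _ _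
      _ < e := hHdeg
      _ ≤ d := hed
      _ = G.natDegree := hGdeg.symm
  have hPdeg : P.natDegree = d := by
    rw [hP, Polynomial.natDegree_sub_eq_left_of_natDegree_lt hAdeg, hGdeg]
  have hglead : g.leadingCoeff = g₁.leadingCoeff := by
    rw [hg, Polynomial.leadingCoeff_mul, Polynomial.leadingCoeff_X_pow, one_mul]
  have hA0 : (Polynomial.C (a : L) * H).coeff d = 0 :=
    Polynomial.coeff_eq_zero_of_natDegree_lt (by rw [← hGdeg]; exact hAdeg)
  have hPcoeffd : P.coeff d = ((g₁.leadingCoeff : ℤ) : L) := by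
    rw [hP, Polynomial.coeff_sub, hA0, sub_zero, hG, Polynomial.coeff_map, ← hd]
    rw [Polynomial.coeff_natDegree, hglead]
    rfl
  have hlcne : ((g₁.leadingCoeff : ℤ) : L) ≠ 0 := by
    simp only [ne_eq, Int.cast_eq_zero]
    intro h
    exact hg₁lead (h ▸ dvd_zero _)
  have hPne : P ≠ 0 := by
    intro h
    rw [h] at hPcoeffd
    exact hlcne (by simpa using hPcoeffd.symm)
  -- card of roots
  have hcard : Multiset.card P.roots = d := by
    rw [← hPdeg]
    exact Polynomial.splits_iff_card_roots.mp (IsAlgClosed.splits P)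
  -- evaluation identities
  have hG_eval : ∀ z : L, G.eval z = z ^ e * G₁.eval z := by
    intro z
    rw [hG, hg, Polynomial.map_mul, Polynomial.eval_mul, Polynomial.map_pow,
      Polynomial.eval_pow, Polynomial.map_X, Polynomial.eval_X, hG₁]
  have hg00 : g.coeff 0 = 0 := by
    rw [hg, Polynomial.mul_coeff_zero, Polynomial.coeff_X_pow]
    simp [he.ne]
  have hG0 : G.eval 0 = 0 := by
    rw [← Polynomial.coeff_zero_eq_eval_zero, hG, Polynomial.coeff_map, hg00]
    simp
  have hH0 : H.eval 0 = ((hp.coeff 0 : ℤ) : L) := by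
    rw [← Polynomial.coeff_zero_eq_eval_zero, hH, Polynomial.coeff_map]
    rfl
  have hP0 : P.eval 0 = -((a : L) * ((hp.coeff 0 : ℤ) : L)) := by
    rw [hP]
    simp only [Polynomial.eval_sub, Polynomial.eval_mul, Polynomial.eval_C]
    rw [hG0, hH0, zero_sub]
  have hh0ne : ((hp.coeff 0 : ℤ) : L) ≠ 0 := by
    simp only [ne_eq, Int.cast_eq_zero]
    intro h
    exact hh0 (h ▸ dvd_zero _)
  have hane : ((a : ℚ) : L) ≠ 0 := by
    simpa using ha0
  have hroot : ∀ z ∈ P.roots, G.eval z = (a : L) * H.eval z ∧ z ≠ 0 := by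
    intro z hz
    have hzr : P.eval z = 0 := (Polynomial.mem_roots hPne).1 hz
    constructor
    · rw [hP] at hzr
      simp only [Polynomial.eval_sub, Polynomial.eval_mul, Polynomial.eval_C] at hzr
      linear_combination hzr
    · intro h0
      rw [h0, hP0] at hzr
      exact (mul_ne_zero hane hh0ne) (by simpa using hzr)
  -- valuation of a
  have hva : v ((a : ℚ) : L) = ((t : ℚ) : WithTop ℚ) := stmt16.vrat_eq v q hv a ha0
  -- CLAIM 2 : valuations of roots
  have claim2 : ∀ z ∈ P.roots, v z = (0 : WithTop ℚ) ∨ v z = ((te : ℚ) : WithTop ℚ) := by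
    intro z hz
    obtain ⟨heq, hz0⟩ := hroot z hz
    have hvzne : v z ≠ ⊤ := v.ne_top_iff.mpr hz0
    obtain ⟨r, hr⟩ := WithTop.ne_top_iff_exists.1 hvzne
    rcases lt_trichotomy r 0 with hneg | hzero | hpos
    · exfalso
      have hvg1 := stmt16.veval_neg v q hv g₁ hr.symm hneg hg₁lead
      rw [← hG₁, ← hm] at hvg1
      have hvG : v (G.eval z) = (((d : ℚ) * r : ℚ) : WithTop ℚ) := by
        rw [hG_eval, v.map_mul, v.map_pow, ← hr, ← WithTop.coe_nsmul, hvg1, ← WithTop.coe_add]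
        rw [WithTop.coe_inj, nsmul_eq_mul, hd']
        push_cast
        ring
      have hvH := stmt16.veval_low v q hv hp hr.symm hneg.le
      rw [← hH] at hvH
      rw [heq, v.map_mul, hva] at hvG
      have hle : ((t + (hp.natDegree : ℚ) * r : ℚ) : WithTop ℚ)
          ≤ (((d : ℚ) * r : ℚ) : WithTop ℚ) := by
        rw [← hvG, WithTop.coe_add]
        exact add_le_add (le_refl _) hvH
      rw [WithTop.coe_le_coe] at hle
      have hdn : (hp.natDegree : ℚ) < (d : ℚ) := by
        exact_mod_cast lt_of_lt_of_le hhe hed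
      nlinarith
    · left
      rw [← hr, hzero]
      rfl
    · right
      have hzpos : (0 : WithTop ℚ) < v z := by
        rw [← hr]
        exact_mod_cast hpos
      have h1 : v (G₁.eval z) = 0 := by
        rw [hG₁]; exact stmt16.veval_pos v q hv g₁ hzpos hg₁0
      have h2 : v (H.eval z) = 0 := by
        rw [hH]; exact stmt16.veval_pos v q hv hp hzpos hh0
      have hkey : v (G.eval z) = v ((a : L)) + v (H.eval z) := by
        rw [heq, v.map_mul]
      rw [hG_eval, v.map_mul, v.map_pow, h1, h2, hva, add_zero, add_zero, ← hr,
        ← WithTop.coe_nsmul, WithTop.coe_inj, nsmul_eq_mul] at hkey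
      rw [← hr, WithTop.coe_inj, hte_eq, eq_div_iff he'.ne']
      linarith
  -- sum of valuations of roots
  have hfact : P = Polynomial.C P.leadingCoeff
      * (P.roots.map fun z => Polynomial.X - Polynomial.C z).prod :=
    (IsAlgClosed.splits P).eq_prod_roots
  have hvlead : v P.leadingCoeff = 0 := by
    have : P.leadingCoeff = ((g₁.leadingCoeff : ℤ) : L) := by
      rw [Polynomial.leadingCoeff, hPdeg, hPcoeffd]
    rw [this]
    exact stmt16.vint_unit v q hv hg₁lead
  have hsum : ((P.roots.map fun z => v z).sum : WithTop ℚ) = ((t : ℚ) : WithTop ℚ) := by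
    have heval0 : P.eval 0 = P.leadingCoeff * (P.roots.map fun z => -z).prod := by
      conv_lhs => rw [hfact]
      rw [Polynomial.eval_mul, Polynomial.eval_C, Polynomial.eval_multiset_prod,
        Multiset.map_map]
      simp
    have hv1 : v (P.eval 0) = ((t : ℚ) : WithTop ℚ) := by
      rw [hP0, v.map_neg, v.map_mul, hva, stmt16.vint_unit v q hv hh0, add_zero]
    rw [heval0, v.map_mul, hvlead, zero_add, stmt16.vprod, Multiset.map_map] at hv1
    rw [← hv1]
    congr 1
    apply Multiset.map_congr rfl
    intro z _
    exact (v.map_neg z).symm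
  -- counting
  have hne0 : ((te : ℚ) : WithTop ℚ) ≠ (0 : WithTop ℚ) := by
    exact_mod_cast hte.ne'
  have hfiltereq : P.roots.filter (fun z => ¬ (v z = (0 : WithTop ℚ)))
      = P.roots.filter (fun z => v z = ((te : ℚ) : WithTop ℚ)) := by
    apply Multiset.filter_congr
    intro z hz
    constructor
    · intro h
      rcases claim2 z hz with h0 | h1
      · exact absurd h0 h
      · exact h1
    · intro h h0
      rw [h0] at h
      exact hne0 h.symm
  have hsplit : P.roots.filter (fun z => v z = (0 : WithTop ℚ))
      + P.roots.filter (fun z => v z = ((te : ℚ) : WithTop ℚ)) = P.roots := by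
    rw [← hfiltereq]
    exact Multiset.filter_add_not _ _
  set s₀ := P.roots.filter (fun z => v z = (0 : WithTop ℚ)) with hs₀
  set s₁ := P.roots.filter (fun z => v z = ((te : ℚ) : WithTop ℚ)) with hs₁
  have hcards : Multiset.card s₀ + Multiset.card s₁ = d := by
    rw [← hcard, ← hsplit, Multiset.card_add]
  -- sums over the two parts
  have hmap₀ : s₀.map (fun z => v z) = Multiset.replicate (Multiset.card s₀) (0 : WithTop ℚ) := by
    rw [Multiset.eq_replicate]
    refine ⟨by simp, ?_⟩
    intro b hb
    obtain ⟨z, hz, rfl⟩ := Multiset.mem_map.1 hb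
    exact (Multiset.mem_filter.1 hz).2
  have hmap₁ : s₁.map (fun z => v z)
      = Multiset.replicate (Multiset.card s₁) ((te : ℚ) : WithTop ℚ) := by
    rw [Multiset.eq_replicate]
    refine ⟨by simp, ?_⟩
    intro b hb
    obtain ⟨z, hz, rfl⟩ := Multiset.mem_map.1 hb
    exact (Multiset.mem_filter.1 hz).2
  have hsum2 : (Multiset.card s₁) • (((te : ℚ)) : WithTop ℚ) = ((t : ℚ) : WithTop ℚ) := by
    have := hsum
    rw [← hsplit, Multiset.map_add, Multiset.sum_add, hmap₀, hmap₁, Multiset.sum_replicate,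
      Multiset.sum_replicate, smul_zero, zero_add] at this
    exact this
  have hcard₁ : Multiset.card s₁ = e := by
    rw [← WithTop.coe_nsmul, WithTop.coe_inj, nsmul_eq_mul] at hsum2
    have h2 : (Multiset.card s₁ : ℚ) * t = (e : ℚ) * t := by
      rw [hte_eq] at hsum2
      field_simp at hsum2
      rw [hsum2]
    have h3 : (Multiset.card s₁ : ℚ) = (e : ℚ) := mul_right_cancel₀ ht.ne' h2
    exact_mod_cast h3
  have hcard₀ : Multiset.card s₀ = d - e := by omega
  exact ⟨hcard, claim2, hcard₀, hcard₁⟩
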